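/- Let K be a locally compact Hausdorff space and let X = C₀(K, ℝ) be the Banach space of continuous real-valued functions on K vanishing at infinity, with the supremum norm. Then the following are equivalent: (a) every point of ext(B_{X*}) is a point of continuity of the identity map I : (B_{X*}, w*) → (B_{X*}, w); (b) K is a discrete space. -/

import Mathlib

open NormedSpace Filter Topology ZeroAtInfty

set_option maxHeartbeats 1000000

noncomputable section

/-- `f` is a point of continuity of the identity map
`I : (B_{E*}, w*) → (B_{E*}, w)` between the closed unit ball of the dual of `E`
with the relative weak-* topology and the same set with the relative weak topology. -/
def IsPoC {E : Type*} [NormedAddCommGroup E] [NormedSpace ℝ E] (f : StrongDual ℝ E) : Prop :=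
  ContinuousWithinAt
    (fun g : WeakDual ℝ E => toWeakSpace ℝ (StrongDual ℝ E) (WeakDual.toStrongDual g))
    {g : WeakDual ℝ E | ‖WeakDual.toStrongDual g‖ ≤ 1}
    (StrongDual.toWeakDual f)

namespace Stmt14

open Set Metric

variable {K : Type*} [TopologicalSpace K] [LocallyCompactSpace K] [T2Space K]

instance instNSC : NormSMulClass ℝ (StrongDual ℝ C₀(K, ℝ)) :=
  NormedSpace.toNormSMulClass (𝕜 := ℝ) (E := StrongDual ℝ C₀(K, ℝ))

theorem abs_le_norm (f : C₀(K, ℝ)) (y : K) : |f y| ≤ ‖f‖ := by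
  rw [← ZeroAtInftyContinuousMap.norm_toBCF_eq_norm]
  simpa [Real.norm_eq_abs] using f.toBCF.norm_coe_le_norm y

theorem norm_le_c0 {f : C₀(K, ℝ)} {M : ℝ} (hM : 0 ≤ M) (h : ∀ y, |f y| ≤ M) : ‖f‖ ≤ M := by
  rw [← ZeroAtInftyContinuousMap.norm_toBCF_eq_norm]
  exact (BoundedContinuousFunction.norm_le hM).2 (by simpa [Real.norm_eq_abs] using h)

/-- The Dirac evaluation functional. -/
def delta (x : K) : StrongDual ℝ C₀(K, ℝ) :=
  LinearMap.mkContinuous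
    { toFun := fun f => f x
      map_add' := fun f g => rfl
      map_smul' := fun c f => rfl } 1
    (fun f => by simpa [Real.norm_eq_abs] using abs_le_norm f x)

@[simp] theorem delta_apply (x : K) (f : C₀(K, ℝ)) : delta x f = f x := rfl

theorem norm_delta_le (x : K) : ‖delta x‖ ≤ 1 :=
  LinearMap.mkContinuous_norm_le _ zero_le_one _

/-- Urysohn-type lemma producing a `C₀` bump function. -/
theorem exists_urysohn {U : Set K} (hU : IsOpen U) {x : K} (hx : x ∈ U) :
    ∃ u : C₀(K, ℝ), u x = 1 ∧ (∀ y, u y ∈ Set.Icc (0 : ℝ) 1) ∧ ∀ y, y ∉ U → u y = 0 := by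
  obtain ⟨f, hf1, hf0, hfc, hficc⟩ :=
    exists_continuous_one_zero_of_isCompact (isCompact_singleton (x := x)) hU.isClosed_compl
      (Set.disjoint_singleton_left.mpr (by simpa using hx))
  exact ⟨⟨f, hfc.is_zero_at_infty⟩, hf1 rfl, fun y => hficc y, fun y hy => hf0 hy⟩

theorem delta_mem_ball (x : K) : delta x ∈ Metric.closedBall (0 : StrongDual ℝ C₀(K, ℝ)) 1 := by
  exact (dist_zero_right (delta x)).trans_le (norm_delta_le x)

/-- The Dirac functional is an extreme point of the dual ball. -/
theorem delta_extreme (x : K) :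
    delta x ∈ Set.extremePoints ℝ (Metric.closedBall (0 : StrongDual ℝ C₀(K, ℝ)) 1) := by
  rw [mem_extremePoints]
  refine ⟨delta_mem_ball x, fun g₁ hg₁ g₂ hg₂ hseg => ?_⟩
  replace hg₁ : ‖g₁‖ ≤ 1 := (dist_zero_right g₁).symm.trans_le hg₁
  replace hg₂ : ‖g₂‖ ≤ 1 := (dist_zero_right g₂).symm.trans_le hg₂
  obtain ⟨t, s, ht, hs, hts, hsum⟩ := hseg
  -- hsum : t • g₁ + s • g₂ = delta x
  have key : ∀ g : StrongDual ℝ C₀(K, ℝ), ‖g‖ ≤ 1 →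
      (∀ u : C₀(K, ℝ), u x = 1 → (∀ y, u y ∈ Set.Icc (0 : ℝ) 1) → g u = 1) →
      g = delta x := by
    intro g hg hgu
    obtain ⟨u₀, hu₀x, hu₀icc, -⟩ := exists_urysohn isOpen_univ (Set.mem_univ x)
    -- step : g h = 0 whenever h x = 0 and ‖h‖ ≤ 1
    have step : ∀ h : C₀(K, ℝ), h x = 0 → ‖h‖ ≤ 1 → g h = 0 := by
      intro h hhx hh1
      have habs : ∀ δ : ℝ, 0 < δ → |g h| ≤ δ := by
        intro δ hδ
        have hVopen : IsOpen {y | |h y| < δ} := by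
          have : Continuous fun y => |h y| := (map_continuous h).abs
          exact isOpen_lt this continuous_const
        have hxV : x ∈ {y | |h y| < δ} := by simp [hhx, hδ]
        obtain ⟨u, hux, huicc, hu0⟩ := exists_urysohn hVopen hxV
        have hgu1 : g u = 1 := hgu u hux huicc
        set k : C₀(K, ℝ) := h - h * u with hk
        have hkval : ∀ y, k y = h y * (1 - u y) := by
          intro y
          simp [hk, mul_one_sub]
        have hnorm : ∀ sg : ℝ, |sg| = 1 → ‖u + sg • k‖ ≤ 1 := by
          intro sg hsg
          refine norm_le_c0 zero_le_one fun y => ?_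
          have h1 : (u + sg • k) y = u y + sg * (h y * (1 - u y)) := by
            simp [hkval y]
          have h2 : |h y| ≤ 1 := le_trans (abs_le_norm h y) hh1
          have h3 : |u y + sg * (h y * (1 - u y))| ≤ |u y| + |sg| * (|h y| * |1 - u y|) := by
            calc |u y + sg * (h y * (1 - u y))| ≤ |u y| + |sg * (h y * (1 - u y))| := abs_add_le _ _
              _ = |u y| + |sg| * (|h y| * |1 - u y|) := by rw [abs_mul, abs_mul]
          rw [h1]
          refine h3.trans ?_
          rw [hsg, one_mul, abs_of_nonneg (huicc y).1,
            abs_of_nonneg (by linarith [(huicc y).2] : (0:ℝ) ≤ 1 - u y)]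
          nlinarith [(huicc y).1, (huicc y).2, abs_nonneg (h y)]
        have hgk : ∀ sg : ℝ, |sg| = 1 → sg * g k ≤ 0 := by
          intro sg hsg
          have hb : |g (u + sg • k)| ≤ 1 := by
            calc |g (u + sg • k)| ≤ ‖g‖ * ‖u + sg • k‖ := g.le_opNorm _
              _ ≤ 1 * 1 := mul_le_mul hg (hnorm sg hsg) (norm_nonneg _) zero_le_one
              _ = 1 := one_mul 1
          have happ : g (u + sg • k) = 1 + sg * g k := by
            rw [map_add, map_smul, hgu1]; simp [smul_eq_mul]
          have hle : g (u + sg • k) ≤ 1 := le_trans (le_abs_self _) hb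
          rw [happ] at hle; linarith
        have hgk0 : g k = 0 := by
          have h1 := hgk 1 (by norm_num)
          have h2 := hgk (-1) (by norm_num)
          simp only [one_mul, neg_mul, neg_nonpos] at h1 h2
          linarith
        have hsmall : |g (h * u)| ≤ δ := by
          have hn : ‖h * u‖ ≤ δ := by
            refine norm_le_c0 hδ.le fun y => ?_
            by_cases hy : y ∈ {z | |h z| < δ}
            · have h1 : |h y| < δ := hy
              have h2 : |(h * u) y| = |h y| * |u y| := by
                simp [abs_mul]
              rw [h2]
              have hu2 := (huicc y).2
              have hu1 := (huicc y).1
              have hau : |u y| ≤ 1 := abs_le.mpr ⟨by linarith, hu2⟩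
              nlinarith [abs_nonneg (h y)]
            · have h0 : u y = 0 := hu0 y hy
              simp [h0, hδ.le]
          calc |g (h * u)| ≤ ‖g‖ * ‖h * u‖ := g.le_opNorm _
            _ ≤ 1 * δ := mul_le_mul hg hn (norm_nonneg _) zero_le_one
            _ = δ := one_mul δ
        have hdecomp : g h = g k + g (h * u) := by
          rw [hk, map_sub]; ring
        rw [hdecomp, hgk0, zero_add]
        exact hsmall
      by_contra hne
      have hpos : 0 < |g h| := abs_pos.mpr hne
      have := habs (|g h| / 2) (by linarith)
      linarith
    have step' : ∀ h : C₀(K, ℝ), h x = 0 → g h = 0 := by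
      intro h hhx
      rcases eq_or_ne h 0 with rfl | hne
      · simp
      · have hpos : (0 : ℝ) < ‖h‖ := norm_pos_iff.mpr hne
        have h1 : g (‖h‖⁻¹ • h) = 0 := by
          refine step _ (by simp [hhx]) ?_
          refine norm_le_c0 zero_le_one fun y => ?_
          have he : (‖h‖⁻¹ • h) y = ‖h‖⁻¹ * h y := rfl
          rw [he, abs_mul, abs_of_pos (inv_pos.mpr hpos)]
          calc ‖h‖⁻¹ * |h y| ≤ ‖h‖⁻¹ * ‖h‖ :=
                mul_le_mul_of_nonneg_left (abs_le_norm h y) (inv_pos.mpr hpos).le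
            _ = 1 := inv_mul_cancel₀ hpos.ne'
        have h2 : g h = ‖h‖ * g (‖h‖⁻¹ • h) := by
          have hsh : ‖h‖ • (‖h‖⁻¹ • h) = h := by
            rw [smul_smul, mul_inv_cancel₀ hpos.ne', one_smul]
          conv_lhs => rw [← hsh]
          rw [map_smul, smul_eq_mul]
        rw [h2, h1, mul_zero]
    ext h
    have hz : g (h - h x • u₀) = 0 := step' _ (by simp [hu₀x])
    have h2 : g h = g (h - h x • u₀) + h x * g u₀ := by
      rw [map_sub, map_smul]; simp [smul_eq_mul]
    rw [delta_apply, h2, hz, zero_add, hgu u₀ hu₀x hu₀icc, mul_one]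
  have eval1 : ∀ u : C₀(K, ℝ), u x = 1 → (∀ y, u y ∈ Set.Icc (0 : ℝ) 1) →
      g₁ u = 1 ∧ g₂ u = 1 := by
    intro u hux huicc
    have hu1 : ‖u‖ ≤ 1 := norm_le_c0 zero_le_one fun y => by
      have h1 := (huicc y).1; have h2 := (huicc y).2
      rw [abs_le]; constructor <;> linarith
    have e1 : g₁ u ≤ 1 := le_trans (le_abs_self _)
      (by
        calc |g₁ u| ≤ ‖g₁‖ * ‖u‖ := g₁.le_opNorm u
          _ ≤ 1 * 1 := mul_le_mul hg₁ hu1 (norm_nonneg _) zero_le_one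
          _ = 1 := one_mul 1)
    have e2 : g₂ u ≤ 1 := le_trans (le_abs_self _)
      (by
        calc |g₂ u| ≤ ‖g₂‖ * ‖u‖ := g₂.le_opNorm u
          _ ≤ 1 * 1 := mul_le_mul hg₂ hu1 (norm_nonneg _) zero_le_one
          _ = 1 := one_mul 1)
    have hsum' : t * g₁ u + s * g₂ u = 1 := by
      have hc := congrArg (fun F : StrongDual ℝ C₀(K, ℝ) => F u) hsum
      simpa [hux] using hc
    constructor
    · nlinarith
    · nlinarith
  exact ⟨key g₁ hg₁ fun u hux huicc => (eval1 u hux huicc).1,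
    key g₂ hg₂ fun u hux huicc => (eval1 u hux huicc).2⟩

/-! ### Point of continuity at isolated points -/

theorem isPoC_smul_delta {x : K} (hx : IsOpen ({x} : Set K)) {σ : ℝ} (hσ : |σ| = 1) :
    IsPoC (σ • delta x) := by
  obtain ⟨χ, hχx, hχicc, hχ0⟩ := exists_urysohn hx rfl
  have hχy : ∀ y, y ≠ x → χ y = 0 := fun y hy => hχ0 y (by simpa using hy)
  set f : StrongDual ℝ C₀(K, ℝ) := σ • delta x with hf
  have hfχ : f χ = σ := by simp [hf, hχx, smul_eq_mul]
  have key : ∀ g : StrongDual ℝ C₀(K, ℝ), ‖g‖ ≤ 1 → ∀ δ : ℝ, 0 < δ →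
      |g χ - σ| < δ → ‖g - f‖ ≤ 2 * δ := by
    intro g hg δ hδ hclose
    refine ContinuousLinearMap.opNorm_le_bound _ (by linarith) fun h => ?_
    set k : C₀(K, ℝ) := h - h x • χ with hk
    have hky : ∀ y, y ≠ x → k y = h y := by
      intro y hy; simp [hk, hχy y hy]
    have hkx : k x = 0 := by simp [hk, hχx]
    -- test function estimates
    have htest : ∀ sg : ℝ, |sg| = 1 → sg * g k ≤ ‖h‖ * δ := by
      intro sg hsg
      have hv : ‖(σ * ‖h‖) • χ + sg • k‖ ≤ ‖h‖ := by
        refine norm_le_c0 (norm_nonneg h) fun y => ?_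
        rcases eq_or_ne y x with rfl | hy
        · have he : ((σ * ‖h‖) • χ + sg • k) y = σ * ‖h‖ := by
            simp [hχx, hkx]
          rw [he, abs_mul, hσ, one_mul, abs_norm]
        · have he : ((σ * ‖h‖) • χ + sg • k) y = sg * h y := by
            simp [hχy y hy, hky y hy]
          rw [he, abs_mul, hsg, one_mul]
          exact abs_le_norm h y
      have h1 : g ((σ * ‖h‖) • χ + sg • k) ≤ ‖h‖ := by
        refine le_trans (le_abs_self _) ?_
        calc |g ((σ * ‖h‖) • χ + sg • k)| ≤ ‖g‖ * ‖(σ * ‖h‖) • χ + sg • k‖ := g.le_opNorm _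
          _ ≤ 1 * ‖h‖ := mul_le_mul hg hv (norm_nonneg _) zero_le_one
          _ = ‖h‖ := one_mul _
      have h2 : g ((σ * ‖h‖) • χ + sg • k) = σ * ‖h‖ * g χ + sg * g k := by
        rw [map_add, map_smul, map_smul]; simp [smul_eq_mul]
      have h3 : 1 - δ < σ * g χ := by
        have hσ2 : σ * σ = 1 := by nlinarith [sq_abs σ, hσ]
        have he : σ * g χ - 1 = σ * (g χ - σ) := by ring_nf; nlinarith [hσ2]
        have : |σ * g χ - 1| < δ := by
          rw [he, abs_mul, hσ, one_mul]; exact hclose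
        linarith [(abs_lt.mp this).1]
      rw [h2] at h1
      nlinarith [norm_nonneg h]
    have hgk : |g k| ≤ ‖h‖ * δ := by
      have h1 := htest 1 (by norm_num)
      have h2 := htest (-1) (by norm_num)
      rw [abs_le]; constructor <;> nlinarith
    have hval : (g - f) h = g k + h x * (g χ - σ) := by
      have : g k = g h - h x * g χ := by
        rw [hk, map_sub, map_smul]; simp [smul_eq_mul]
      simp only [ContinuousLinearMap.sub_apply, hf, ContinuousLinearMap.smul_apply,
        delta_apply, smul_eq_mul, this]
      ring
    rw [Real.norm_eq_abs, hval]
    calc |g k + h x * (g χ - σ)| ≤ |g k| + |h x| * |g χ - σ| := by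
          refine (abs_add_le _ _).trans ?_
          rw [abs_mul]
      _ ≤ ‖h‖ * δ + ‖h‖ * δ :=
          add_le_add hgk
            (mul_le_mul (abs_le_norm h x) hclose.le (abs_nonneg _) (norm_nonneg _))
      _ = 2 * δ * ‖h‖ := by ring
  -- now the continuity statement
  have T1 : Filter.Tendsto (fun g : WeakDual ℝ C₀(K, ℝ) => WeakDual.toStrongDual g)
      (𝓝[{g : WeakDual ℝ C₀(K, ℝ) | ‖WeakDual.toStrongDual g‖ ≤ 1}]
        (StrongDual.toWeakDual f)) (𝓝 f) := by
    refine (Metric.tendsto_nhds (α := StrongDual ℝ C₀(K, ℝ))).mpr ?_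
    intro ε hε
    have hδ : (0 : ℝ) < ε / 4 := by linarith
    have hWopen : IsOpen {g : WeakDual ℝ C₀(K, ℝ) | |g χ - σ| < ε / 4} := by
      have hco : Continuous fun g : WeakDual ℝ C₀(K, ℝ) => |g χ - σ| :=
        ((WeakDual.eval_continuous χ).sub continuous_const).abs
      exact isOpen_lt hco continuous_const
    have hWnhds : {g : WeakDual ℝ C₀(K, ℝ) | |g χ - σ| < ε / 4} ∈
        𝓝 (StrongDual.toWeakDual f) := by
      refine hWopen.mem_nhds ?_
      show |(StrongDual.toWeakDual f) χ - σ| < ε / 4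
      have : (StrongDual.toWeakDual f) χ = f χ := rfl
      rw [this, hfχ, sub_self, abs_zero]
      exact hδ
    filter_upwards [nhdsWithin_le_nhds hWnhds, self_mem_nhdsWithin] with g hgW hgS
    have hb := key (WeakDual.toStrongDual g) hgS (ε / 4) hδ hgW
    rw [dist_eq_norm (WeakDual.toStrongDual g) f]
    calc ‖WeakDual.toStrongDual g - f‖ ≤ 2 * (ε / 4) := hb
      _ < ε := by linarith
  have T2 := ((toWeakSpaceCLM ℝ (StrongDual ℝ C₀(K, ℝ))).continuous.tendsto f).comp T1
  exact T2

/-! ### Classification of extreme points when `K` is discrete -/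

section Discrete

variable [DiscreteTopology K]

/-- The indicator bump function at a point of a discrete space. -/
def chi (x : K) : C₀(K, ℝ) := (exists_urysohn (isOpen_discrete {x}) rfl).choose

theorem chi_self (x : K) : chi x x = 1 :=
  (exists_urysohn (isOpen_discrete {x}) rfl).choose_spec.1

theorem chi_ne {x y : K} (h : y ≠ x) : chi x y = 0 :=
  (exists_urysohn (isOpen_discrete {x}) rfl).choose_spec.2.2 y (by simpa using h)

theorem norm_chi_le (x : K) : ‖chi x‖ ≤ 1 :=
  norm_le_c0 zero_le_one fun y => by
    rcases eq_or_ne y x with rfl | hy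
    · simp [chi_self]
    · simp [chi_ne hy]

theorem abs_apply_chi_le (f : StrongDual ℝ C₀(K, ℝ)) (x : K) : |f (chi x)| ≤ ‖f‖ := by
  have h1 := f.le_opNorm (chi x)
  have h2 := norm_chi_le x
  rw [Real.norm_eq_abs] at h1
  nlinarith [norm_nonneg f]

theorem norm_sub_smul_delta (f : StrongDual ℝ C₀(K, ℝ)) (x : K) :
    ‖f - f (chi x) • delta x‖ ≤ ‖f‖ - |f (chi x)| := by
  set a : ℝ := f (chi x) with ha
  have hbound : |a| ≤ ‖f‖ := abs_apply_chi_le f x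
  refine ContinuousLinearMap.opNorm_le_bound _ (by linarith) fun h => ?_
  set k : C₀(K, ℝ) := h - h x • chi x with hk
  have hky : ∀ y, y ≠ x → k y = h y := fun y hy => by simp [hk, chi_ne hy]
  have hkx : k x = 0 := by simp [hk, chi_self]
  set s1 : ℝ := if 0 ≤ f k then 1 else -1 with hs1
  set s2 : ℝ := if 0 ≤ a then 1 else -1 with hs2
  have hs1abs : |s1| = 1 := by rw [hs1]; split <;> simp
  have hs2abs : |s2| = 1 := by rw [hs2]; split <;> simp
  have hs1k : s1 * f k = |f k| := by
    rw [hs1]; split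
    · rw [one_mul, abs_of_nonneg ‹_›]
    · rw [neg_one_mul, abs_of_neg (lt_of_not_ge ‹_›)]
  have hs2a : s2 * a = |a| := by
    rw [hs2]; split
    · rw [one_mul, abs_of_nonneg ‹_›]
    · rw [neg_one_mul, abs_of_neg (lt_of_not_ge ‹_›)]
  have htest : ‖s1 • k + (s2 * ‖h‖) • chi x‖ ≤ ‖h‖ := by
    refine norm_le_c0 (norm_nonneg h) fun y => ?_
    by_cases hy : y = x
    · rw [hy]
      have he : (s1 • k + (s2 * ‖h‖) • chi x) x = s2 * ‖h‖ := by
        simp [hkx, chi_self]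
      rw [he, abs_mul, hs2abs, one_mul, abs_norm]
    · have he : (s1 • k + (s2 * ‖h‖) • chi x) y = s1 * h y := by
        simp [hky y hy, chi_ne hy]
      rw [he, abs_mul, hs1abs, one_mul]
      exact abs_le_norm h y
  have happ : f (s1 • k + (s2 * ‖h‖) • chi x) = |f k| + |a| * ‖h‖ := by
    rw [map_add, map_smul, map_smul, smul_eq_mul, smul_eq_mul, hs1k, ← ha]
    linear_combination ‖h‖ * hs2a
  have hle : |f k| + |a| * ‖h‖ ≤ ‖f‖ * ‖h‖ := by
    rw [← happ]
    refine le_trans (le_abs_self _) ?_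
    calc |f (s1 • k + (s2 * ‖h‖) • chi x)| ≤ ‖f‖ * ‖s1 • k + (s2 * ‖h‖) • chi x‖ :=
          f.le_opNorm _
      _ ≤ ‖f‖ * ‖h‖ := mul_le_mul_of_nonneg_left htest (norm_nonneg f)
  have hval : (f - a • delta x) h = f k := by
    simp only [ContinuousLinearMap.sub_apply, ContinuousLinearMap.smul_apply,
      delta_apply, smul_eq_mul]
    rw [hk, map_sub, map_smul, smul_eq_mul, ha]
    ring
  rw [Real.norm_eq_abs, hval]
  nlinarith

theorem extreme_classify [Nonempty K] {f : StrongDual ℝ C₀(K, ℝ)}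
    (hf : f ∈ Set.extremePoints ℝ (Metric.closedBall (0 : StrongDual ℝ C₀(K, ℝ)) 1)) :
    ∃ (x : K) (σ : ℝ), |σ| = 1 ∧ f = σ • delta x := by
  classical
  rw [mem_extremePoints] at hf
  obtain ⟨hfball, hfext⟩ := hf
  replace hfball : ‖f‖ ≤ 1 := (dist_zero_right f).symm.trans_le hfball
  by_cases hone : ∃ x : K, |f (chi x)| = 1
  · obtain ⟨x, hx⟩ := hone
    refine ⟨x, f (chi x), hx, ?_⟩
    have h1 := norm_sub_smul_delta f x
    rw [hx] at h1
    have h2 : ‖f - f (chi x) • delta x‖ ≤ 0 := by linarith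
    have h3 : f - f (chi x) • delta x = 0 :=
      (norm_le_zero_iff (a := f - f (chi x) • delta x)).mp h2
    rw [sub_eq_zero (a := f)] at h3
    exact h3
  push_neg at hone
  by_cases hmid : ∃ x : K, f (chi x) ≠ 0
  · exfalso
    obtain ⟨x, hx⟩ := hmid
    set a : ℝ := f (chi x) with ha
    set t : ℝ := |a| with htdef
    have ht0 : 0 < t := abs_pos.mpr hx
    have ht1 : t < 1 := lt_of_le_of_ne (le_trans (abs_apply_chi_le f x) hfball) (hone x)
    set g₁ : StrongDual ℝ C₀(K, ℝ) := (a / t) • delta x with hg₁def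
    set g₂ : StrongDual ℝ C₀(K, ℝ) := (1 - t)⁻¹ • (f - a • delta x) with hg₂def
    have hg₁ball : g₁ ∈ Metric.closedBall (0 : StrongDual ℝ C₀(K, ℝ)) 1 := by
      rw [Metric.mem_closedBall, dist_eq_norm g₁ 0, sub_zero g₁, hg₁def, norm_smul]
      rw [Real.norm_eq_abs, abs_div, ← htdef, abs_abs, div_self ht0.ne']
      simpa using norm_delta_le x
    have hg₂ball : g₂ ∈ Metric.closedBall (0 : StrongDual ℝ C₀(K, ℝ)) 1 := by
      rw [Metric.mem_closedBall, dist_eq_norm g₂ 0, sub_zero g₂, hg₂def, norm_smul]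
      rw [Real.norm_eq_abs, abs_of_pos (inv_pos.mpr (by linarith : (0:ℝ) < 1 - t))]
      have h1 := norm_sub_smul_delta f x
      rw [← ha, ← htdef] at h1
      calc (1 - t)⁻¹ * ‖f - a • delta x‖ ≤ (1 - t)⁻¹ * (1 - t) := by
            have : ‖f - a • delta x‖ ≤ 1 - t := by linarith
            exact mul_le_mul_of_nonneg_left this (inv_nonneg.mpr (by linarith))
        _ = 1 := inv_mul_cancel₀ (by linarith)
    have hseg : f ∈ openSegment ℝ g₁ g₂ := by
      refine ⟨t, 1 - t, ht0, by linarith, by ring, ?_⟩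
      rw [hg₁def, hg₂def, smul_smul, smul_smul, mul_div_cancel₀ _ ht0.ne',
        mul_inv_cancel₀ (by linarith : (1:ℝ) - t ≠ 0), one_smul]
      abel
    obtain ⟨he1, -⟩ := hfext g₁ hg₁ball g₂ hg₂ball hseg
    -- he1 : g₁ = f
    have : g₁ (chi x) = a := by rw [he1, ← ha]
    rw [hg₁def] at this
    simp only [ContinuousLinearMap.smul_apply, delta_apply, chi_self, smul_eq_mul,
      mul_one] at this
    have h0 : a = a * t := by
      field_simp at this
      linarith [this]
    have h1 : a * (1 - t) = 0 := by linear_combination h0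
    rcases mul_eq_zero.mp h1 with h2 | h2
    · exact hx h2
    · linarith
  · push_neg at hmid
    exfalso
    by_cases hnorm1 : ‖f‖ < 1
    · set x₀ : K := Classical.arbitrary K
      set c : ℝ := 1 - ‖f‖ with hc
      have hc0 : 0 < c := by linarith
      set g₁ : StrongDual ℝ C₀(K, ℝ) := f + c • delta x₀ with hg₁def
      set g₂ : StrongDual ℝ C₀(K, ℝ) := f - c • delta x₀ with hg₂def
      have hball : ∀ s : ℝ, |s| = 1 → f + (s * c) • delta x₀ ∈
          Metric.closedBall (0 : StrongDual ℝ C₀(K, ℝ)) 1 := by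
        intro s hs
        rw [Metric.mem_closedBall, dist_eq_norm (f + (s * c) • delta x₀) 0,
          sub_zero (f + (s * c) • delta x₀)]
        calc ‖f + (s * c) • delta x₀‖ ≤ ‖f‖ + ‖(s * c) • delta x₀‖ := norm_add_le f _
          _ ≤ ‖f‖ + c := by
              rw [norm_smul, Real.norm_eq_abs, abs_mul, hs, one_mul,
                abs_of_pos hc0]
              have := norm_delta_le x₀
              nlinarith
          _ = 1 := by rw [hc]; ring
      have hg₁ball : g₁ ∈ Metric.closedBall (0 : StrongDual ℝ C₀(K, ℝ)) 1 := by
        have := hball 1 (by norm_num); simpa [hg₁def] using this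
      have hg₂ball : g₂ ∈ Metric.closedBall (0 : StrongDual ℝ C₀(K, ℝ)) 1 := by
        have := hball (-1) (by norm_num)
        rw [hg₂def, sub_eq_add_neg f (c • delta x₀)]
        convert this using 2
        rw [neg_one_mul, neg_smul c (delta x₀)]
      have hseg : f ∈ openSegment ℝ g₁ g₂ := by
        refine ⟨1/2, 1/2, by norm_num, by norm_num, by norm_num, ?_⟩
        rw [hg₁def, hg₂def]
        module
      obtain ⟨he1, -⟩ := hfext g₁ hg₁ball g₂ hg₂ball hseg
      have : g₁ (chi x₀) = f (chi x₀) := by rw [he1]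
      rw [hg₁def] at this
      simp only [ContinuousLinearMap.add_apply, ContinuousLinearMap.smul_apply,
        delta_apply, chi_self, smul_eq_mul, mul_one] at this
      linarith
    · have hn : ‖f‖ = 1 := le_antisymm hfball (not_lt.mp hnorm1)
      have hex : ∃ h : C₀(K, ℝ), (1/2 : ℝ) * ‖h‖ < |f h| := by
        by_contra hA
        push_neg at hA
        have : ‖f‖ ≤ 1/2 :=
          ContinuousLinearMap.opNorm_le_bound _ (by norm_num) fun h => by
            simpa [Real.norm_eq_abs] using hA h
        rw [hn] at this; norm_num at this
      obtain ⟨h, hh⟩ := hex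
      have hfh0 : 0 < |f h| := lt_of_le_of_lt (by positivity) hh
      set ε : ℝ := |f h| / 2 with hε
      have hε0 : 0 < ε := by positivity
      -- the set where |h| ≥ ε is finite
      have hcc : (⇑h) ⁻¹' Metric.ball (0 : ℝ) ε ∈ cocompact K :=
        (ZeroAtInftyContinuousMap.zero_at_infty' h) (Metric.ball_mem_nhds 0 hε0)
      obtain ⟨C, hCcomp, hCsub⟩ := Filter.mem_cocompact.mp hcc
      have hCfin : C.Finite := hCcomp.finite_of_discrete
      have hTsub : {y | ε ≤ |h y|} ⊆ C := by
        intro y hy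
        by_contra hyC
        have := hCsub hyC
        simp only [Set.mem_preimage, Metric.mem_ball, Real.dist_eq, sub_zero] at this
        exact absurd hy (by simpa using not_le.mpr this)
      have hTfin : {y | ε ≤ |h y|}.Finite := hCfin.subset hTsub
      set F : Finset K := hTfin.toFinset with hF
      set h'' : C₀(K, ℝ) := h - ∑ y ∈ F, h y • chi y with hh''
      have hfh'' : f h'' = f h := by
        rw [hh'', map_sub, map_sum]
        have : ∀ y ∈ F, f (h y • chi y) = 0 := fun y _ => by
          rw [map_smul, smul_eq_mul, hmid y, mul_zero]
        rw [Finset.sum_congr rfl this, Finset.sum_const_zero, sub_zero]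
      have hsum : ∀ z : K, (∑ y ∈ F, h y • chi y) z = if z ∈ F then h z else 0 := by
        intro z
        have : (∑ y ∈ F, h y • chi y) z = delta z (∑ y ∈ F, h y • chi y) := rfl
        rw [this, map_sum]
        by_cases hz : z ∈ F
        · rw [Finset.sum_eq_single_of_mem z hz]
          · rw [map_smul, delta_apply, chi_self, smul_eq_mul, mul_one, if_pos hz]
          · intro y hy hyz
            rw [map_smul, delta_apply, chi_ne (Ne.symm hyz), smul_eq_mul, mul_zero]
        · rw [if_neg hz]
          refine Finset.sum_eq_zero fun y hy => ?_
          have : z ≠ y := fun hzy => hz (hzy ▸ hy)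
          rw [map_smul, delta_apply, chi_ne this, smul_eq_mul, mul_zero]
      have hnorm'' : ‖h''‖ ≤ ε := by
        refine norm_le_c0 hε0.le fun z => ?_
        have he : h'' z = h z - (if z ∈ F then h z else 0) := by
          rw [hh'']
          have : (h - ∑ y ∈ F, h y • chi y) z = h z - (∑ y ∈ F, h y • chi y) z := rfl
          rw [this, hsum z]
        by_cases hz : z ∈ F
        · rw [he, if_pos hz, sub_self, abs_zero]; exact hε0.le
        · rw [he, if_neg hz, sub_zero]
          have : z ∉ {y | ε ≤ |h y|} := fun hmem => hz (hTfin.mem_toFinset.mpr hmem)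
          simpa using le_of_not_ge (by simpa using this)
      have : |f h| ≤ ε := by
        rw [← hfh'']
        calc |f h''| ≤ ‖f‖ * ‖h''‖ := f.le_opNorm _
          _ ≤ 1 * ε := by
              refine mul_le_mul hfball hnorm'' (norm_nonneg _) zero_le_one
          _ = ε := one_mul ε
      rw [hε] at this
      linarith

end Discrete

/-! ### Non-discreteness gives a failure of the point-of-continuity property -/

theorem discrete_of_poc
    (H : ∀ f ∈ Set.extremePoints ℝ (Metric.closedBall (0 : StrongDual ℝ C₀(K, ℝ)) 1), IsPoC f) :
    DiscreteTopology K := by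
  classical
  rw [discreteTopology_iff_isOpen_singleton]
  intro x
  by_contra hxopen
  have hne : (𝓝[≠] x).NeBot := by
    rw [isOpen_singleton_iff_punctured_nhds] at hxopen
    exact Filter.neBot_iff.mpr hxopen
  -- the type of bump functions at `x`
  let N := {u : C₀(K, ℝ) // u x = 1 ∧ ∀ y, |u y| ≤ 1}
  let A : Set K → Set N := fun U => {u | ∀ y, y ∉ U → (u : C₀(K, ℝ)) y = 0}
  have hAmono : Monotone A := fun U V hUV u hu y hy => hu y fun h => hy (hUV h)
  have hF : (Filter.lift' (𝓝 x) A).NeBot := by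
    rw [Filter.lift'_neBot_iff hAmono]
    intro U hU
    obtain ⟨V, hVU, hVopen, hxV⟩ := mem_nhds_iff.mp hU
    obtain ⟨u, hux, huicc, hu0⟩ := exists_urysohn hVopen hxV
    exact ⟨⟨u, hux, fun y => abs_le.mpr ⟨by linarith [(huicc y).1], (huicc y).2⟩⟩,
      fun y hy => hu0 y fun h => hy (hVU h)⟩
  let 𝒰 : Ultrafilter N := @Ultrafilter.of N (Filter.lift' (𝓝 x) A) hF
  have h𝒰F : (𝒰 : Filter N) ≤ Filter.lift' (𝓝 x) A := Ultrafilter.of_le _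
  -- ultrafilter limits of bounded test evaluations
  have hlim : ∀ g : StrongDual ℝ C₀(K, ℝ), ∃ cg : ℝ, cg ∈ Set.Icc (-‖g‖) ‖g‖ ∧
      Filter.Tendsto (fun u : N => g (u : C₀(K, ℝ))) 𝒰 (𝓝 cg) := by
    intro g
    have hmem : Set.Icc (-‖g‖) ‖g‖ ∈ Ultrafilter.map (fun u : N => g (u : C₀(K, ℝ))) 𝒰 := by
      have hpre : (fun u : N => g (u : C₀(K, ℝ))) ⁻¹' Set.Icc (-‖g‖) ‖g‖ = Set.univ := by
        refine Set.eq_univ_of_forall fun u => ?_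
        have hun : ‖(u : C₀(K, ℝ))‖ ≤ 1 := norm_le_c0 zero_le_one u.2.2
        have h1 : |g (u : C₀(K, ℝ))| ≤ ‖g‖ := by
          have h2 := g.le_opNorm (u : C₀(K, ℝ))
          rw [Real.norm_eq_abs] at h2
          nlinarith [norm_nonneg g]
        exact abs_le.mp h1
      rw [Ultrafilter.mem_map, hpre]
      exact Filter.univ_mem
    obtain ⟨cg, hcg, hle⟩ := isCompact_Icc.ultrafilter_le_nhds' _ hmem
    refine ⟨cg, hcg, ?_⟩
    rw [Ultrafilter.coe_map] at hle
    exact hle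
  choose c hc hctend using hlim
  have hadd : ∀ g₁ g₂ : StrongDual ℝ C₀(K, ℝ), c (g₁ + g₂) = c g₁ + c g₂ := by
    intro g₁ g₂
    refine tendsto_nhds_unique (hctend (g₁ + g₂)) ?_
    refine ((hctend g₁).add (hctend g₂)).congr fun u => ?_
    simp
  have hsmul : ∀ (r : ℝ) (g : StrongDual ℝ C₀(K, ℝ)), c (r • g) = r * c g := by
    intro r g
    refine tendsto_nhds_unique (hctend (r • g)) ?_
    refine ((hctend g).const_mul r).congr fun u => ?_
    simp
  let φlin : StrongDual ℝ C₀(K, ℝ) →ₗ[ℝ] ℝ :=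
    { toFun := c, map_add' := hadd, map_smul' := hsmul }
  let φ : StrongDual ℝ (StrongDual ℝ C₀(K, ℝ)) :=
    LinearMap.mkContinuous (E := StrongDual ℝ C₀(K, ℝ)) φlin 1 fun g => by
      show ‖c g‖ ≤ 1 * ‖g‖
      rw [Real.norm_eq_abs, one_mul]
      exact abs_le.mpr ⟨(hc g).1, (hc g).2⟩
  have hφ_eval : ∀ g : StrongDual ℝ C₀(K, ℝ), φ g = c g := fun g => rfl
  have hφdeltax : φ (delta x) = 1 := by
    rw [hφ_eval]
    refine tendsto_nhds_unique (hctend (delta x)) ?_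
    have he : (fun u : N => delta x (u : C₀(K, ℝ))) = fun _ => (1 : ℝ) :=
      funext fun u => by simp [u.2.1]
    rw [he]
    exact tendsto_const_nhds
  have hφdeltay : ∀ y : K, y ≠ x → φ (delta y) = 0 := by
    intro y hy
    obtain ⟨U, V, hUopen, hVopen, hxU, hyV, hUV⟩ := t2_separation (Ne.symm hy)
    have hAU : A U ∈ (𝒰 : Filter N) := h𝒰F (Filter.mem_lift' (hUopen.mem_nhds hxU))
    rw [hφ_eval]
    refine tendsto_nhds_unique (hctend (delta y)) ?_
    refine Filter.Tendsto.congr' ?_ tendsto_const_nhds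
    filter_upwards [hAU] with u hu
    have h0 : (u : C₀(K, ℝ)) y = 0 := hu y fun hyU => Set.disjoint_left.mp hUV hyU hyV
    simp [h0]
  -- use the point-of-continuity hypothesis at `delta x`
  have hpoc := H _ (delta_extreme x)
  unfold IsPoC at hpoc
  let Δ : K → WeakDual ℝ C₀(K, ℝ) := fun y => StrongDual.toWeakDual (delta y)
  have hΔcont : Continuous Δ := by
    refine WeakBilin.continuous_of_continuous_eval _ fun h => ?_
    have he : (fun y => topDualPairing ℝ C₀(K, ℝ) (Δ y) h) = fun y => h y := rfl
    rw [he]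
    exact map_continuous h
  have hmemS : ∀ y : K,
      Δ y ∈ {g : WeakDual ℝ C₀(K, ℝ) | ‖WeakDual.toStrongDual g‖ ≤ 1} :=
    fun y => norm_delta_le y
  have h1 : Filter.Tendsto Δ (𝓝 x)
      (𝓝[{g : WeakDual ℝ C₀(K, ℝ) | ‖WeakDual.toStrongDual g‖ ≤ 1}]
        (StrongDual.toWeakDual (delta x))) :=
    tendsto_nhdsWithin_of_tendsto_nhds_of_eventually_within _ (hΔcont.tendsto x)
      (Filter.Eventually.of_forall hmemS)
  have h2 := Filter.Tendsto.comp hpoc h1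
  have hφc : Continuous fun v : WeakSpace ℝ (StrongDual ℝ C₀(K, ℝ)) =>
      φ ((toWeakSpace ℝ (StrongDual ℝ C₀(K, ℝ))).symm v) :=
    WeakBilin.eval_continuous ((topDualPairing ℝ (StrongDual ℝ C₀(K, ℝ))).flip) φ
  have h3 : Filter.Tendsto (fun y => φ (delta y)) (𝓝 x) (𝓝 (φ (delta x))) :=
    (hφc.tendsto _).comp h2
  rw [hφdeltax] at h3
  have h4 : Filter.Tendsto (fun y => φ (delta y)) (𝓝[≠] x) (𝓝 1) :=
    h3.mono_left nhdsWithin_le_nhds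
  have h5 : Filter.Tendsto (fun y => φ (delta y)) (𝓝[≠] x) (𝓝 0) := by
    refine Filter.Tendsto.congr' ?_ tendsto_const_nhds
    filter_upwards [self_mem_nhdsWithin] with y hy
    exact (hφdeltay y hy).symm
  exact zero_ne_one (tendsto_nhds_unique h5 h4)

end Stmt14

/-- For a locally compact Hausdorff space `K` and `X = C₀(K, ℝ)`, every
extreme point of `B_{X*}` is a point of continuity of `I : (B_{X*}, w*) → (B_{X*}, w)`
if and only if `K` is discrete. -/
theorem stmt_14 {K : Type*} [TopologicalSpace K] [LocallyCompactSpace K] [T2Space K] :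
    (∀ f ∈ Set.extremePoints ℝ (Metric.closedBall (0 : StrongDual ℝ C₀(K, ℝ)) 1), IsPoC f) ↔
      DiscreteTopology K := by
  constructor
  · exact Stmt14.discrete_of_poc
  · intro hK f hf
    by_cases hE : Nonempty K
    · obtain ⟨x, σ, hσ, rfl⟩ := Stmt14.extreme_classify hf
      exact Stmt14.isPoC_smul_delta (isOpen_discrete _) hσ
    · haveI : IsEmpty K := not_nonempty_iff.mp hE
      haveI hsub1 : Subsingleton C₀(K, ℝ) :=
        ⟨fun a b => ZeroAtInftyContinuousMap.ext fun y => isEmptyElim y⟩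
      haveI hsub2 : Subsingleton (StrongDual ℝ C₀(K, ℝ)) :=
        ⟨fun a b => ContinuousLinearMap.ext fun h => by
          rw [Subsingleton.elim h 0, map_zero, map_zero]⟩
      haveI hsub3 : Subsingleton (WeakSpace ℝ (StrongDual ℝ C₀(K, ℝ))) :=
        Equiv.subsingleton (toWeakSpace ℝ (StrongDual ℝ C₀(K, ℝ))).symm.toEquiv
      show Filter.Tendsto _ _ _
      exact Filter.Tendsto.congr (fun g => Subsingleton.elim _ _) tendsto_const_nhds
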